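/- In Cl(15,0), the element (1 + Φ*)/16 is idempotent, where Φ* = e_{12478BDE} + e_{12479ACF} + e_{12568BCF} + e_{12569ADE} + e_{13468ADF} + e_{13469BCE} + e_{13578ACE} + e_{13579BDF} + e_{234589EF} + e_{2345ABCD} + e_{236789CD} + e_{2367ABEF} + e_{456789AB} + e_{4567CDEF} + e_{89ABCDEF}. -/
import Mathlib


noncomputable def Q15 : QuadraticForm ℝ (Fin 15 → ℝ) :=
  QuadraticMap.weightedSumSquares ℝ (fun _ : Fin 15 => (1 : ℝ))

noncomputable def e15 (i : Fin 15) : CliffordAlgebra Q15 :=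
  CliffordAlgebra.ι Q15 (Pi.single i 1)

/-- Product of generators with the given (0-based) indices;
hexadecimal index k of the paper corresponds to k-1 here. -/
noncomputable def p15 (l : List (Fin 15)) : CliffordAlgebra Q15 := (l.map e15).prod

/-- Φ_A = e1234567. -/
noncomputable def ΦA : CliffordAlgebra Q15 := p15 [0,1,2,3,4,5,6]

/-- Φ_O = e_{12389AB} + e_{14589CD} + e_{16789EF} + e_{2468ACE} + e_{2578ADF}
  + e_{3478BCF} + e_{3568BDE}. -/
noncomputable def ΦO : CliffordAlgebra Q15 :=
  p15 [0,1,2,7,8,9,10] + p15 [0,3,4,7,8,11,12] + p15 [0,5,6,7,8,13,14]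
    + p15 [1,3,5,7,9,11,13] + p15 [1,4,6,7,9,12,14] + p15 [2,3,6,7,10,11,14]
    + p15 [2,4,5,7,10,12,13]

/-- Φ_P = e_{123CDEF} + e_{145ABEF} + e_{167ABCD} + e_{2469BDF} + e_{2579BCE}
  + e_{3479ADE} + e_{3569ACF}. -/
noncomputable def ΦP : CliffordAlgebra Q15 :=
  p15 [0,1,2,11,12,13,14] + p15 [0,3,4,9,10,13,14] + p15 [0,5,6,9,10,11,12]
    + p15 [1,3,5,8,10,12,14] + p15 [1,4,6,8,10,11,13] + p15 [2,3,6,8,9,12,13]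
    + p15 [2,4,5,8,9,11,14]

/-- The pseudoscalar e_{123456789ABCDEF}. -/
noncomputable def ω15 : CliffordAlgebra Q15 :=
  p15 [0,1,2,3,4,5,6,7,8,9,10,11,12,13,14]

/-- The co-associative 8-form calibration Φ* (dual of Φ). -/
noncomputable def Φstar : CliffordAlgebra Q15 :=
  p15 [0,1,3,6,7,10,12,13] + p15 [0,1,3,6,8,9,11,14] + p15 [0,1,4,5,7,10,11,14]
    + p15 [0,1,4,5,8,9,12,13] + p15 [0,2,3,5,7,9,12,14] + p15 [0,2,3,5,8,10,11,13]
    + p15 [0,2,4,6,7,9,11,13] + p15 [0,2,4,6,8,10,12,14] + p15 [1,2,3,4,7,8,13,14]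
    + p15 [1,2,3,4,9,10,11,12] + p15 [1,2,5,6,7,8,11,12] + p15 [1,2,5,6,9,10,13,14]
    + p15 [3,4,5,6,7,8,9,10] + p15 [3,4,5,6,11,12,13,14] + p15 [7,8,9,10,11,12,13,14]


section helpers

lemma Q15_apply (v : Fin 15 → ℝ) : Q15 v = ∑ i, v i * v i := by
  simp [Q15, QuadraticMap.weightedSumSquares_apply]

lemma e_sq (i : Fin 15) : e15 i * e15 i = 1 := by
  rw [e15, CliffordAlgebra.ι_sq_scalar]
  simp [Q15_apply, Pi.single_apply, Finset.sum_ite_eq']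

lemma e_anticomm {i j : Fin 15} (h : i ≠ j) : e15 i * e15 j = -(e15 j * e15 i) := by
  have key := CliffordAlgebra.ι_mul_ι_add_swap (Q := Q15) (Pi.single i 1) (Pi.single j 1)
  have hp : QuadraticMap.polar (⇑Q15) (Pi.single i (1:ℝ)) (Pi.single j 1) = 0 := by
    simp only [QuadraticMap.polar, Q15_apply, Pi.single_apply, Pi.add_apply]
    rw [Finset.sum_congr rfl
      (g := fun k => ((if k = i then (1:ℝ) else 0) * (if k = i then (1:ℝ) else 0)
        + (if k = j then (1:ℝ) else 0) * (if k = j then (1:ℝ) else 0))) ?_]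
    · simp [Finset.sum_add_distrib, Finset.sum_ite_eq']
    · intro k _
      by_cases hk : k = i <;> by_cases hk2 : k = j <;> simp_all
  rw [hp] at key
  simp only [map_zero] at key
  rw [e15, e15]
  exact eq_neg_of_add_eq_zero_left key

lemma e_swap' (i j : Fin 15) (x : CliffordAlgebra Q15) (h : j < i) :
    e15 i * (e15 j * x) = -(e15 j * (e15 i * x)) := by
  rw [← mul_assoc, e_anticomm (Fin.ne_of_gt h), neg_mul, mul_assoc]

lemma e_swap (i j : Fin 15) (h : j < i) : e15 i * e15 j = -(e15 j * e15 i) :=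
  e_anticomm (Fin.ne_of_gt h)

lemma e_sq' (i : Fin 15) (x : CliffordAlgebra Q15) : e15 i * (e15 i * x) = x := by
  rw [← mul_assoc, e_sq, one_mul]

end helpers

set_option maxRecDepth 40000 in
set_option maxHeartbeats 1600000 in
lemma row0 : p15 [0,1,3,6,7,10,12,13] * Φstar = 1 + Φstar - p15 [0,1,3,6,7,10,12,13] := by
  rw [Φstar]
  simp (config := { decide := true }) [p15, mul_add, mul_assoc, e_swap', e_sq', e_swap, e_sq,
    mul_neg, neg_mul, neg_neg]
  abel

set_option maxRecDepth 40000 in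
set_option maxHeartbeats 1600000 in
lemma row1 : p15 [0,1,3,6,8,9,11,14] * Φstar = 1 + Φstar - p15 [0,1,3,6,8,9,11,14] := by
  rw [Φstar]
  simp (config := { decide := true }) [p15, mul_add, mul_assoc, e_swap', e_sq', e_swap, e_sq,
    mul_neg, neg_mul, neg_neg]
  abel

set_option maxRecDepth 40000 in
set_option maxHeartbeats 1600000 in
lemma row2 : p15 [0,1,4,5,7,10,11,14] * Φstar = 1 + Φstar - p15 [0,1,4,5,7,10,11,14] := by
  rw [Φstar]
  simp (config := { decide := true }) [p15, mul_add, mul_assoc, e_swap', e_sq', e_swap, e_sq,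
    mul_neg, neg_mul, neg_neg]
  abel

set_option maxRecDepth 40000 in
set_option maxHeartbeats 1600000 in
lemma row3 : p15 [0,1,4,5,8,9,12,13] * Φstar = 1 + Φstar - p15 [0,1,4,5,8,9,12,13] := by
  rw [Φstar]
  simp (config := { decide := true }) [p15, mul_add, mul_assoc, e_swap', e_sq', e_swap, e_sq,
    mul_neg, neg_mul, neg_neg]
  abel

set_option maxRecDepth 40000 in
set_option maxHeartbeats 1600000 in
lemma row4 : p15 [0,2,3,5,7,9,12,14] * Φstar = 1 + Φstar - p15 [0,2,3,5,7,9,12,14] := by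
  rw [Φstar]
  simp (config := { decide := true }) [p15, mul_add, mul_assoc, e_swap', e_sq', e_swap, e_sq,
    mul_neg, neg_mul, neg_neg]
  abel

set_option maxRecDepth 40000 in
set_option maxHeartbeats 1600000 in
lemma row5 : p15 [0,2,3,5,8,10,11,13] * Φstar = 1 + Φstar - p15 [0,2,3,5,8,10,11,13] := by
  rw [Φstar]
  simp (config := { decide := true }) [p15, mul_add, mul_assoc, e_swap', e_sq', e_swap, e_sq,
    mul_neg, neg_mul, neg_neg]
  abel

set_option maxRecDepth 40000 in
set_option maxHeartbeats 1600000 in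
lemma row6 : p15 [0,2,4,6,7,9,11,13] * Φstar = 1 + Φstar - p15 [0,2,4,6,7,9,11,13] := by
  rw [Φstar]
  simp (config := { decide := true }) [p15, mul_add, mul_assoc, e_swap', e_sq', e_swap, e_sq,
    mul_neg, neg_mul, neg_neg]
  abel

set_option maxRecDepth 40000 in
set_option maxHeartbeats 1600000 in
lemma row7 : p15 [0,2,4,6,8,10,12,14] * Φstar = 1 + Φstar - p15 [0,2,4,6,8,10,12,14] := by
  rw [Φstar]
  simp (config := { decide := true }) [p15, mul_add, mul_assoc, e_swap', e_sq', e_swap, e_sq,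
    mul_neg, neg_mul, neg_neg]
  abel

set_option maxRecDepth 40000 in
set_option maxHeartbeats 1600000 in
lemma row8 : p15 [1,2,3,4,7,8,13,14] * Φstar = 1 + Φstar - p15 [1,2,3,4,7,8,13,14] := by
  rw [Φstar]
  simp (config := { decide := true }) [p15, mul_add, mul_assoc, e_swap', e_sq', e_swap, e_sq,
    mul_neg, neg_mul, neg_neg]
  abel

set_option maxRecDepth 40000 in
set_option maxHeartbeats 1600000 in
lemma row9 : p15 [1,2,3,4,9,10,11,12] * Φstar = 1 + Φstar - p15 [1,2,3,4,9,10,11,12] := by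
  rw [Φstar]
  simp (config := { decide := true }) [p15, mul_add, mul_assoc, e_swap', e_sq', e_swap, e_sq,
    mul_neg, neg_mul, neg_neg]
  abel

set_option maxRecDepth 40000 in
set_option maxHeartbeats 1600000 in
lemma row10 : p15 [1,2,5,6,7,8,11,12] * Φstar = 1 + Φstar - p15 [1,2,5,6,7,8,11,12] := by
  rw [Φstar]
  simp (config := { decide := true }) [p15, mul_add, mul_assoc, e_swap', e_sq', e_swap, e_sq,
    mul_neg, neg_mul, neg_neg]
  abel

set_option maxRecDepth 40000 in
set_option maxHeartbeats 1600000 in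
lemma row11 : p15 [1,2,5,6,9,10,13,14] * Φstar = 1 + Φstar - p15 [1,2,5,6,9,10,13,14] := by
  rw [Φstar]
  simp (config := { decide := true }) [p15, mul_add, mul_assoc, e_swap', e_sq', e_swap, e_sq,
    mul_neg, neg_mul, neg_neg]
  abel

set_option maxRecDepth 40000 in
set_option maxHeartbeats 1600000 in
lemma row12 : p15 [3,4,5,6,7,8,9,10] * Φstar = 1 + Φstar - p15 [3,4,5,6,7,8,9,10] := by
  rw [Φstar]
  simp (config := { decide := true }) [p15, mul_add, mul_assoc, e_swap', e_sq', e_swap, e_sq,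
    mul_neg, neg_mul, neg_neg]
  abel

set_option maxRecDepth 40000 in
set_option maxHeartbeats 1600000 in
lemma row13 : p15 [3,4,5,6,11,12,13,14] * Φstar = 1 + Φstar - p15 [3,4,5,6,11,12,13,14] := by
  rw [Φstar]
  simp (config := { decide := true }) [p15, mul_add, mul_assoc, e_swap', e_sq', e_swap, e_sq,
    mul_neg, neg_mul, neg_neg]
  abel

set_option maxRecDepth 40000 in
set_option maxHeartbeats 1600000 in
lemma row14 : p15 [7,8,9,10,11,12,13,14] * Φstar = 1 + Φstar - p15 [7,8,9,10,11,12,13,14] := by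
  rw [Φstar]
  simp (config := { decide := true }) [p15, mul_add, mul_assoc, e_swap', e_sq', e_swap, e_sq,
    mul_neg, neg_mul, neg_neg]
  abel


lemma Phistar_sq : Φstar * Φstar = (15:ℕ) • (1 : CliffordAlgebra Q15) + (14:ℕ) • Φstar := by
  nth_rewrite 1 [Φstar]
  simp only [add_mul, row0, row1, row2, row3, row4, row5, row6, row7, row8, row9,
    row10, row11, row12, row13, row14]
  rw [Φstar]
  abel

/-- (1 + Φ*)/16 is idempotent. -/
theorem stmt19 : IsIdempotentElem ((16 : ℝ)⁻¹ • (1 + Φstar)) := by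
  unfold IsIdempotentElem
  rw [smul_mul_assoc, mul_smul_comm, smul_smul]
  have h : (1 + Φstar) * (1 + Φstar) = (16:ℕ) • (1 + Φstar) := by
    simp only [mul_add, add_mul, one_mul, mul_one, Phistar_sq]
    abel
  rw [h, ← Nat.cast_smul_eq_nsmul ℝ, smul_smul]
  norm_num
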